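/- Let G = (V, E, w) be a connected weighted graph with positive edge weights, let T = (V, F, w) be a spanning tree of G, with Laplacians L_G and L_T, and let M be the Moore–Penrose pseudoinverse of L_T. Then every eigenvalue λ of L_G · M (root of its characteristic polynomial over ℂ) is either equal to 0 or is a real number with λ ≥ 1. -/

import Mathlib

open Matrix

/-- The rank-one Laplacian contribution `(ψ_u - ψ_v)(ψ_u - ψ_v)ᵀ` of an edge,
as a function on unordered pairs. -/
noncomputable def edgeLap {V : Type*} [DecidableEq V] : Sym2 V → Matrix V V ℝ :=
  Sym2.lift ⟨fun u v =>
      Matrix.vecMulVec (Pi.single u 1 - Pi.single v 1) (Pi.single u 1 - Pi.single v 1),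
    by
      intro u v
      ext i j
      simp [Matrix.vecMulVec]
      ring⟩

/-- The Laplacian of a weighted graph: `L_G = Σ_{e∈E} w(e) (ψ_u - ψ_v)(ψ_u - ψ_v)ᵀ`. -/
noncomputable def lapW {V : Type*} [Fintype V] [DecidableEq V]
    (G : SimpleGraph V) [DecidableRel G.Adj] (w : Sym2 V → ℝ) : Matrix V V ℝ :=
  ∑ e ∈ G.edgeFinset, w e • edgeLap e

section Aux

open scoped ComplexOrder

open Polynomial

variable {V : Type*} [Fintype V] [DecidableEq V]

set_option linter.unusedSectionVars false

lemma edgeLap_transpose (e : Sym2 V) : (edgeLap e)ᵀ = edgeLap e := by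
  induction e using Sym2.ind with
  | _ u v =>
    ext i j
    simp [edgeLap, vecMulVec]
    ring

lemma lapW_transpose (G : SimpleGraph V) [DecidableRel G.Adj] (w : Sym2 V → ℝ) :
    (lapW G w)ᵀ = lapW G w := by
  unfold lapW
  rw [transpose_sum]
  exact Finset.sum_congr rfl fun e _ => by rw [transpose_smul, edgeLap_transpose]

lemma smul_edgeLap_psd (r : ℝ) (hr : 0 ≤ r) (e : Sym2 V) :
    PosSemidef ((r • edgeLap e).map (algebraMap ℝ ℂ)) := by
  induction e using Sym2.ind with
  | _ u v =>
    set d : V → ℝ := Pi.single u 1 - Pi.single v 1 with hd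
    have key : (r • edgeLap s(u, v)).map (algebraMap ℝ ℂ) =
        (Matrix.replicateRow Unit (fun i => ((Real.sqrt r * d i : ℝ) : ℂ)))ᴴ *
          (Matrix.replicateRow Unit (fun i => ((Real.sqrt r * d i : ℝ) : ℂ))) := by
      ext i j
      have hrr : Real.sqrt r * Real.sqrt r = r := Real.mul_self_sqrt hr
      simp [edgeLap, vecMulVec, Matrix.mul_apply, Matrix.replicateRow_apply,
        Matrix.conjTranspose_apply, Matrix.map_apply, ← hd, Complex.conj_ofReal,
        ← Complex.ofReal_mul, Pi.sub_apply]
      rw [show Real.sqrt r * d i * (Real.sqrt r * d j)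
          = (Real.sqrt r * Real.sqrt r) * (d i * d j) by ring, hrr]
      push_cast
      simp [hd, Pi.sub_apply]
    rw [key]
    exact posSemidef_conjTranspose_mul_self _

lemma sum_edgeLap_psd (s : Finset (Sym2 V)) (w : Sym2 V → ℝ) (hw : ∀ e ∈ s, 0 ≤ w e) :
    PosSemidef ((∑ e ∈ s, w e • edgeLap e).map (algebraMap ℝ ℂ)) := by
  have hmap : (∑ e ∈ s, w e • edgeLap e).map (algebraMap ℝ ℂ)
      = ∑ e ∈ s, (w e • edgeLap e).map (algebraMap ℝ ℂ) := by
    ext i j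
    simp [Matrix.map_apply, Matrix.sum_apply]
  rw [hmap]
  refine Finset.sum_induction _ _ (fun a b ha hb => ha.add hb) PosSemidef.zero ?_
  intro e he
  exact smul_edgeLap_psd _ (hw e he) _

lemma pinv_eq_of_penrose {L M N : Matrix V V ℝ}
    (h1 : L * M * L = L) (h2 : M * L * M = M)
    (h3 : (L * M)ᵀ = L * M) (h4 : (M * L)ᵀ = M * L)
    (h1' : L * N * L = L) (h2' : N * L * N = N)
    (h3' : (L * N)ᵀ = L * N) (h4' : (N * L)ᵀ = N * L) :
    M = N := by
  have key1 : L * M = L * N := by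
    calc L * M = (L * M)ᵀ := h3.symm
      _ = Mᵀ * Lᵀ := transpose_mul _ _
      _ = Mᵀ * (L * N * L)ᵀ := by rw [h1']
      _ = Mᵀ * (Lᵀ * (L * N)ᵀ) := by rw [transpose_mul]
      _ = Mᵀ * (Lᵀ * (L * N)) := by rw [h3']
      _ = (Mᵀ * Lᵀ) * (L * N) := by rw [mul_assoc]
      _ = (L * M)ᵀ * (L * N) := by rw [transpose_mul]
      _ = (L * M) * (L * N) := by rw [h3]
      _ = ((L * M) * L) * N := by simp only [mul_assoc]
      _ = L * N := by rw [h1]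
  have key2 : N * L = M * L := by
    calc N * L = (N * L)ᵀ := h4'.symm
      _ = Lᵀ * Nᵀ := transpose_mul _ _
      _ = (L * M * L)ᵀ * Nᵀ := by rw [h1]
      _ = ((M * L)ᵀ * Lᵀ) * Nᵀ := by
            rw [show L * M * L = L * (M * L) from mul_assoc _ _ _, transpose_mul]
      _ = ((M * L) * Lᵀ) * Nᵀ := by rw [h4]
      _ = (M * L) * (Lᵀ * Nᵀ) := by rw [mul_assoc]
      _ = (M * L) * (N * L)ᵀ := by rw [transpose_mul]
      _ = (M * L) * (N * L) := by rw [h4']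
      _ = M * (L * N * L) := by simp only [mul_assoc]
      _ = M * L := by rw [h1']
  calc M = M * L * M := h2.symm
    _ = M * (L * M) := mul_assoc _ _ _
    _ = M * (L * N) := by rw [key1]
    _ = (M * L) * N := (mul_assoc _ _ _).symm
    _ = (N * L) * N := by rw [key2]
    _ = N := h2'

lemma exists_eigenvector_of_isRoot {B : Matrix V V ℂ} {μ : ℂ}
    (h : B.charpoly.IsRoot μ) : ∃ v : V → ℂ, v ≠ 0 ∧ B *ᵥ v = μ • v := by
  have hdet : (Matrix.scalar V μ - B).det = 0 := by
    have h' := h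
    unfold Matrix.charpoly at h'
    rw [IsRoot.def, _root_.eval_det, matPolyEquiv_charmatrix] at h'
    simpa [eval_sub, eval_C, eval_X] using h'
  obtain ⟨v, hv0, hv⟩ := Matrix.exists_mulVec_eq_zero_iff.2 hdet
  refine ⟨v, hv0, ?_⟩
  rw [sub_mulVec] at hv
  have h2 : (Matrix.scalar V μ) *ᵥ v = μ • v := by
    rw [Matrix.scalar_apply]
    ext i
    simp [Matrix.mulVec_diagonal]
  rw [h2] at hv
  exact (sub_eq_zero.mp hv).symm

end Aux

open scoped ComplexOrder in
open Polynomial in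
/-- If `G` is a connected weighted graph with positive edge weights, `T` a spanning tree of
`G`, and `M` the Moore–Penrose pseudoinverse of `L_T`, then every eigenvalue of `L_G · M`
(root of its characteristic polynomial over `ℂ`) is either `0` or a real number `≥ 1`. -/
theorem eigenvalues_lap_mul_pinv_zero_or_ge_one {V : Type*} [Fintype V] [DecidableEq V]
    (G T : SimpleGraph V) [DecidableRel G.Adj] [DecidableRel T.Adj]
    (hG : G.Connected) (hT : T.IsTree) (hTG : T ≤ G)
    (w : Sym2 V → ℝ) (hw : ∀ e ∈ G.edgeSet, 0 < w e)
    (M : Matrix V V ℝ)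
    (hM1 : lapW T w * M * lapW T w = lapW T w)
    (hM2 : M * lapW T w * M = M)
    (hM3 : (lapW T w * M)ᵀ = lapW T w * M)
    (hM4 : (M * lapW T w)ᵀ = M * lapW T w) :
    ∀ μ : ℂ, (((lapW G w * M).charpoly).map (algebraMap ℝ ℂ)).IsRoot μ →
      μ = 0 ∨ (μ.im = 0 ∧ 1 ≤ μ.re) := by
  intro μ hroot
  by_cases hμ : μ = 0
  · exact Or.inl hμ
  right
  set f := algebraMap ℝ ℂ
  set Lr := lapW T w with hLr
  have hLt : Lrᵀ = Lr := lapW_transpose T w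
  -- M is symmetric
  have hMsym : Mᵀ = M := by
    have h1' : Lr * Mᵀ * Lr = Lr := by
      have := congrArg Matrix.transpose hM1
      simpa [transpose_mul, hLt, mul_assoc] using this
    have h2' : Mᵀ * Lr * Mᵀ = Mᵀ := by
      have := congrArg Matrix.transpose hM2
      simpa [transpose_mul, hLt, mul_assoc] using this
    have e1 : Lr * Mᵀ = M * Lr := by
      calc Lr * Mᵀ = (M * Lrᵀ)ᵀ := by rw [transpose_mul, transpose_transpose]
        _ = (M * Lr)ᵀ := by rw [hLt]
        _ = M * Lr := hM4
    have e2 : Mᵀ * Lr = Lr * M := by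
      calc Mᵀ * Lr = (Lrᵀ * M)ᵀ := by rw [transpose_mul, transpose_transpose]
        _ = (Lr * M)ᵀ := by rw [hLt]
        _ = Lr * M := hM3
    have h3' : (Lr * Mᵀ)ᵀ = Lr * Mᵀ := by rw [e1]; exact hM4
    have h4' : (Mᵀ * Lr)ᵀ = Mᵀ * Lr := by rw [e2]; exact hM3
    exact (pinv_eq_of_penrose hM1 hM2 hM3 hM4 h1' h2' h3' h4').symm
  -- move to ℂ
  set A : Matrix V V ℂ := (lapW G w).map f with hA
  set L : Matrix V V ℂ := Lr.map f with hL
  set N : Matrix V V ℂ := M.map f with hN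
  have hroot' : ((lapW G w * M).map f).charpoly.IsRoot μ := by
    rw [Matrix.charpoly_map]; exact hroot
  have hAN : (lapW G w * M).map f = A * N := Matrix.map_mul
  rw [hAN] at hroot'
  obtain ⟨v, hv0, hv⟩ := exists_eigenvector_of_isRoot hroot'
  set y : V → ℂ := N *ᵥ v with hy
  have hAy : A *ᵥ y = μ • v := by rw [hy, mulVec_mulVec]; exact hv
  -- Penrose over ℂ
  have hP2 : N * L * N = N := by
    rw [hN, hL, ← Matrix.map_mul, ← Matrix.map_mul, hM2]
  have hNherm : Nᴴ = N := by
    ext i j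
    have hm : M j i = M i j := by
      have := congrFun (congrFun hMsym i) j
      simpa [Matrix.transpose_apply] using this
    simp [hN, Matrix.conjTranspose_apply, Matrix.map_apply, f, Complex.conj_ofReal, hm]
  -- positivity
  have hLpsd : L.PosSemidef := by
    rw [hL, hLr]
    unfold lapW
    exact sum_edgeLap_psd _ _ fun e he => (hw e ((SimpleGraph.edgeSet_mono hTG)
      (SimpleGraph.mem_edgeFinset.mp he))).le
  have hDpsd : PosSemidef (A - L) := by
    have hsub : T.edgeFinset ⊆ G.edgeFinset := SimpleGraph.edgeFinset_mono hTG
    have hdiff : lapW G w - lapW T w = ∑ e ∈ G.edgeFinset \ T.edgeFinset, w e • edgeLap e := by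
      unfold lapW
      rw [Finset.sum_sdiff_eq_sub hsub]
    have hmapsub : A - L = (lapW G w - lapW T w).map f := by
      ext i j
      simp [hA, hL, hLr, Matrix.map_apply]
    rw [hmapsub, hdiff]
    exact sum_edgeLap_psd _ _ fun e he =>
      (hw e (SimpleGraph.mem_edgeFinset.mp (Finset.mem_sdiff.mp he).1)).le
  -- key dot product identities
  have hkey : ∀ z : V → ℂ, star v ⬝ᵥ N *ᵥ z = star y ⬝ᵥ z := by
    intro z
    have hsy : star y = star v ᵥ* N := by rw [hy, star_mulVec, hNherm]
    rw [dotProduct_mulVec, ← hsy]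
  have hyv : y = N *ᵥ (L *ᵥ y) := by
    conv_lhs => rw [hy, ← hP2]
    rw [← mulVec_mulVec, ← mulVec_mulVec, ← hy]
  have hr1 : star y ⬝ᵥ v = star y ⬝ᵥ L *ᵥ y := by
    rw [← hkey v, ← hkey (L *ᵥ y)]
    conv_lhs => rw [show N *ᵥ v = y from rfl, hyv]
  set r : ℂ := star y ⬝ᵥ L *ᵥ y with hr
  have hrpos : 0 ≤ r := hLpsd.dotProduct_mulVec_nonneg y
  have hs_ge : r ≤ star y ⬝ᵥ A *ᵥ y := by
    have h0 := hDpsd.dotProduct_mulVec_nonneg y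
    rw [sub_mulVec, dotProduct_sub] at h0
    exact sub_nonneg.mp h0
  have hs_eq : star y ⬝ᵥ A *ᵥ y = μ * r := by
    rw [hAy, dotProduct_smul, smul_eq_mul, hr1]
  -- r ≠ 0
  have hrne : r ≠ 0 := by
    intro h0
    have hLy : L *ᵥ y = 0 := (hLpsd.dotProduct_mulVec_zero_iff y).1 (by rw [← hr]; exact h0)
    have hy0 : y = 0 := by rw [hyv, hLy, mulVec_zero]
    have : μ • v = 0 := by rw [← hAy, hy0, mulVec_zero]
    rcases smul_eq_zero.mp this with h | h
    · exact hμ h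
    · exact hv0 h
  -- numerics
  rw [hs_eq] at hs_ge
  obtain ⟨hre, him⟩ := Complex.nonneg_iff.mp hrpos
  have hrre : 0 < r.re := by
    rcases lt_or_eq_of_le hre with h | h
    · exact h
    · exfalso; exact hrne (Complex.ext h.symm him.symm)
  obtain ⟨hle, heq⟩ := Complex.le_def.mp hs_ge
  rw [Complex.mul_im] at heq
  rw [Complex.mul_re] at hle
  have him' : μ.im = 0 := by
    have : μ.re * r.im + μ.im * r.re = r.im := heq.symm
    rw [← him] at this
    simp at this
    rcases this with h | h
    · exact h
    · exact absurd h.symm (ne_of_lt hrre)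
  refine ⟨him', ?_⟩
  rw [him', ← him] at hle
  simp at hle
  exact (le_mul_iff_one_le_left hrre).mp hle
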